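/- Let u be a non-trivial plane wave solution on Minkowski space of the polarized Maxwell equation *du = αi·du (α = ±1), let F := du, and define the Riemann curvature R_{κλμν}(x) := Re(F_{κλ}(x) F_{μν}(x)). Then R possesses all the symmetry properties of a Riemann curvature generated by a Levi-Civita connection: R_{κλμν} = −R_{λκμν} = −R_{κλνμ} = R_{μνκλ}, and the cyclic sum identity R_{κλμν} ε^{κλμν} = 0 holds at every point. -/
import Mathlib


noncomputable section
open Complex Finset

/-- The Minkowski metric `diag(+1,-1,-1,-1)` on `ℝ⁴`. -/
def gR (μ ν : Fin 4) : ℝ := if μ = ν then (if μ = (0 : Fin 4) then 1 else -1) else 0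

/-- The value of an index as a real number. -/
def fv (a : Fin 4) : ℝ := (a : ℕ)

/-- The totally antisymmetric symbol `ε` with `ε₀₁₂₃ = +1`. -/
def eps (a b c d : Fin 4) : ℝ :=
  ((fv b - fv a) * (fv c - fv a) * (fv d - fv a) *
    (fv c - fv b) * (fv d - fv b) * (fv d - fv c)) / 12

/-- The Hodge star of an antisymmetric rank-2 (lower-index) tensor:
`(*L)_{μν} = (1/2) L^{κλ} ε_{κλμν}`, indices raised with the Minkowski metric. -/
def hodge (L : Fin 4 → Fin 4 → ℂ) (μ ν : Fin 4) : ℂ :=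
  (1/2) * ∑ κ : Fin 4, ∑ l : Fin 4, ((gR κ κ * gR l l * eps κ l μ ν : ℝ) : ℂ) * L κ l

/-- The partial derivative `∂_μ` of a function on Minkowski space `ℝ⁴`. -/
def pd {E : Type*} [NormedAddCommGroup E] [NormedSpace ℝ E]
    (μ : Fin 4) (f : (Fin 4 → ℝ) → E) (x : Fin 4 → ℝ) : E :=
  fderiv ℝ f x (Pi.single μ 1)

/-- The exterior derivative of a complex vector field: `(du)_{μν} = ∂_μ u_ν − ∂_ν u_μ`. -/
def dEx (u : (Fin 4 → ℝ) → Fin 4 → ℂ) (x : Fin 4 → ℝ) (μ ν : Fin 4) : ℂ :=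
  pd μ (fun y => u y ν) x - pd ν (fun y => u y μ) x

/-- `u` is a plane wave: `u(x) = w e^{−i k·x}` with constant `w` and constant real `k ≠ 0`. -/
def IsPlaneWave (u : (Fin 4 → ℝ) → Fin 4 → ℂ) : Prop :=
  ∃ (w : Fin 4 → ℂ) (k : Fin 4 → ℝ), k ≠ 0 ∧
    ∀ x μ, u x μ = w μ * Complex.exp (-Complex.I * ∑ ρ : Fin 4, ((k ρ : ℂ) * (x ρ : ℂ)))


/-- The Riemann curvature of the spacetimes of Theorem 2:
`R_{κλμν}(x) = Re(F_{κλ}(x) F_{μν}(x))` with `F = du`. -/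
def Rwave (u : (Fin 4 → ℝ) → Fin 4 → ℂ) (x : Fin 4 → ℝ) (κ lam μ ν : Fin 4) : ℝ :=
  (dEx u x κ lam * dEx u x μ ν).re

lemma fv0 : fv 0 = 0 := by rw [fv, show ((0 : Fin 4) : ℕ) = 0 from rfl]; norm_num
lemma fv1 : fv 1 = 1 := by rw [fv, show ((1 : Fin 4) : ℕ) = 1 from rfl]; norm_num
lemma fv2 : fv 2 = 2 := by rw [fv, show ((2 : Fin 4) : ℕ) = 2 from rfl]; norm_num
lemma fv3 : fv 3 = 3 := by rw [fv, show ((3 : Fin 4) : ℕ) = 3 from rfl]; norm_num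
lemma gR0 : gR 0 0 = 1 := by norm_num [gR]
lemma gR1 : gR 1 1 = -1 := by rw [gR]; norm_num [Fin.ext_iff]
lemma gR2 : gR 2 2 = -1 := by rw [gR]; norm_num [Fin.ext_iff]
lemma gR3 : gR 3 3 = -1 := by simp [gR, show (3:Fin 4) ≠ 0 from by decide]

/-- Auxiliary: the continuous linear map `y ↦ -i k·y`. -/
def kCLM (k : Fin 4 → ℝ) : (Fin 4 → ℝ) →L[ℝ] ℂ :=
  ∑ ρ : Fin 4, ((-Complex.I * k ρ) • (Complex.ofRealCLM.comp (ContinuousLinearMap.proj ρ)))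

lemma kCLM_apply (k : Fin 4 → ℝ) (y : Fin 4 → ℝ) :
    kCLM k y = -Complex.I * ∑ ρ : Fin 4, (k ρ : ℂ) * (y ρ : ℂ) := by
  simp [kCLM, ContinuousLinearMap.sum_apply, Finset.mul_sum]
  exact Finset.sum_congr rfl fun ρ _ => by ring

lemma kCLM_single (k : Fin 4 → ℝ) (μ : Fin 4) :
    kCLM k (Pi.single μ 1) = -Complex.I * k μ := by
  rw [kCLM_apply, Finset.sum_eq_single μ]
  · simp
  · intro b _ hb
    simp [Pi.single_apply, hb.symm]
  · simp

lemma pw_pd (w : ℂ) (k : Fin 4 → ℝ) (x : Fin 4 → ℝ) (μ : Fin 4) :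
    pd μ (fun y : Fin 4 → ℝ => w * Complex.exp (-Complex.I * ∑ ρ : Fin 4, ((k ρ : ℂ) * (y ρ : ℂ)))) x
      = w * Complex.exp (-Complex.I * ∑ ρ : Fin 4, ((k ρ : ℂ) * (x ρ : ℂ))) * (-Complex.I * k μ) := by
  have h0 : HasFDerivAt (fun y : Fin 4 → ℝ => Complex.exp (kCLM k y))
      (Complex.exp (kCLM k x) • kCLM k) x := (kCLM k).hasFDerivAt.cexp
  have h1 := h0.const_mul w
  simp only [kCLM_apply] at h1
  rw [pd, h1.fderiv]
  simp [kCLM_single, smul_smul, mul_assoc]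

set_option maxHeartbeats 2000000 in
/-- for a non-trivial plane wave solution `u` of `*du = α i du`, the curvature
`R_{κλμν} = Re((du)_{κλ}(du)_{μν})` has all the symmetries of a Levi-Civita Riemann
curvature: `R_{κλμν} = −R_{λκμν} = −R_{κλνμ} = R_{μνκλ}` and `R_{κλμν} ε^{κλμν} = 0`. -/
theorem curvature_levi_civita_symmetries (u : (Fin 4 → ℝ) → Fin 4 → ℂ)
    (hpw : IsPlaneWave u)
    (hnt : ¬ (∀ x μ ν, dEx u x μ ν = 0))
    (α : ℝ) (hα : α = 1 ∨ α = -1)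
    (hpol : ∀ x μ ν, hodge (dEx u x) μ ν = (α : ℂ) * Complex.I * dEx u x μ ν) :
    (∀ x κ lam μ ν, Rwave u x κ lam μ ν = - Rwave u x lam κ μ ν) ∧
    (∀ x κ lam μ ν, Rwave u x κ lam μ ν = - Rwave u x κ lam ν μ) ∧
    (∀ x κ lam μ ν, Rwave u x κ lam μ ν = Rwave u x μ ν κ lam) ∧
    (∀ x, ∑ κ : Fin 4, ∑ lam : Fin 4, ∑ μ : Fin 4, ∑ ν : Fin 4,
        gR κ κ * gR lam lam * gR μ μ * gR ν ν * Rwave u x κ lam μ ν * eps κ lam μ ν = 0) := by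
  obtain ⟨w, k, hk, hu⟩ := hpw
  have hA : ∀ x (μ ν : Fin 4), dEx u x μ ν = - dEx u x ν μ := by
    intro x μ ν; simp [dEx]
  refine ⟨?_, ?_, ?_, ?_⟩
  · intro x κ lam μ ν
    rw [Rwave, Rwave, hA x lam κ]
    simp
  · intro x κ lam μ ν
    rw [Rwave, Rwave, hA x ν μ]
    simp
  · intro x κ lam μ ν
    rw [Rwave, Rwave, mul_comm]
  · intro x
    have hd : ∀ (μ ν : Fin 4), dEx u x μ ν =
        Complex.exp (-Complex.I * ∑ ρ : Fin 4, ((k ρ : ℂ) * (x ρ : ℂ))) * (-Complex.I) *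
          ((k μ : ℂ) * w ν - (k ν : ℂ) * w μ) := by
      intro μ ν
      have e1 : (fun y => u y ν) = fun y : Fin 4 → ℝ =>
          w ν * Complex.exp (-Complex.I * ∑ ρ : Fin 4, ((k ρ : ℂ) * (y ρ : ℂ))) :=
        funext fun y => hu y ν
      have e2 : (fun y => u y μ) = fun y : Fin 4 → ℝ =>
          w μ * Complex.exp (-Complex.I * ∑ ρ : Fin 4, ((k ρ : ℂ) * (y ρ : ℂ))) :=
        funext fun y => hu y μ
      rw [dEx, e1, e2, pw_pd, pw_pd]
      ring
    have hC : (∑ κ : Fin 4, ∑ lam : Fin 4, ∑ μ : Fin 4, ∑ ν : Fin 4,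
        ((gR κ κ * gR lam lam * gR μ μ * gR ν ν * eps κ lam μ ν : ℝ) : ℂ) *
          (dEx u x κ lam * dEx u x μ ν)) = 0 := by
      simp only [hd]
      simp only [Fin.sum_univ_four, eps, fv0, fv1, fv2, fv3, gR0, gR1, gR2, gR3]
      push_cast
      ring
    have := congrArg Complex.re hC
    simp only [Complex.re_sum, Complex.re_ofReal_mul, Complex.zero_re] at this
    rw [← this]
    refine Finset.sum_congr rfl fun κ _ => Finset.sum_congr rfl fun lam _ =>
      Finset.sum_congr rfl fun μ _ => Finset.sum_congr rfl fun ν _ => ?_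
    rw [Rwave]
    ring
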